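/- A bounded paranormal operator T satisfies ‖Tⁿx‖·‖x‖^{n−1} ≥ ‖Tx‖ⁿ for all x and all n ≥ 1, and consequently is normaloid: its spectral radius equals its norm. -/

import Mathlib

theorem stmt_2 {H : Type*} [NormedAddCommGroup H] [InnerProductSpace ℂ H]
    [CompleteSpace H] (T : H →L[ℂ] H)
    (hT : ∀ x : H, ‖T x‖ ^ 2 ≤ ‖(T ∘L T) x‖ * ‖x‖) :
    (∀ x : H, ∀ n : ℕ, 1 ≤ n → ‖T x‖ ^ n ≤ ‖(T ^ n) x‖ * ‖x‖ ^ (n - 1)) ∧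
      spectralRadius ℂ T = ‖T‖₊ := by
  -- key log-convexity inequality
  have key : ∀ (x : H) (n : ℕ),
      ‖(T ^ (n + 1)) x‖ ^ 2 ≤ ‖(T ^ (n + 2)) x‖ * ‖(T ^ n) x‖ := by
    intro x n
    have h := hT ((T ^ n) x)
    have h1 : (T ^ (n + 1)) x = T ((T ^ n) x) := by
      rw [pow_succ']; rfl
    have h2 : (T ^ (n + 2)) x = (T ∘L T) ((T ^ n) x) := by
      show (T ^ (n + 2)) x = T (T ((T ^ n) x))
      rw [show n + 2 = n + 1 + 1 from rfl, pow_succ', pow_succ']; rfl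
    rw [h1, h2]; exact h
  -- ratio monotonicity
  have ratio : ∀ (x : H) (n : ℕ),
      ‖T x‖ * ‖(T ^ n) x‖ ≤ ‖x‖ * ‖(T ^ (n + 1)) x‖ := by
    intro x n
    induction n with
    | zero => simp [mul_comm]
    | succ n ih =>
      rcases eq_or_lt_of_le (norm_nonneg ((T ^ n) x)) with h0 | h0
      · have hk := key x n
        rw [← h0, mul_zero] at hk
        have h2 : ‖(T ^ (n + 1)) x‖ ^ 2 = 0 := le_antisymm hk (by positivity)
        have : ‖(T ^ (n + 1)) x‖ = 0 := by
          simpa using (pow_eq_zero_iff two_ne_zero).mp h2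
        rw [this, mul_zero]
        positivity
      · have hk := key x n
        have h1 : (‖T x‖ * ‖(T ^ (n+1)) x‖) * ‖(T ^ n) x‖ ≤
            (‖x‖ * ‖(T ^ (n+2)) x‖) * ‖(T ^ n) x‖ := by
          nlinarith [mul_le_mul_of_nonneg_right ih (norm_nonneg ((T ^ (n+1)) x)),
            mul_le_mul_of_nonneg_left hk (norm_nonneg x), norm_nonneg x,
            norm_nonneg (T x), norm_nonneg ((T ^ (n+1)) x), norm_nonneg ((T ^ (n+2)) x)]
        exact le_of_mul_le_mul_right h1 h0
  -- main inequality
  have main : ∀ (x : H) (m : ℕ), ‖T x‖ ^ (m + 1) ≤ ‖(T ^ (m + 1)) x‖ * ‖x‖ ^ m := by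
    intro x m
    induction m with
    | zero => simp
    | succ m ih =>
      have h1 : ‖T x‖ ^ (m + 2) = ‖T x‖ * ‖T x‖ ^ (m + 1) := by ring
      have h2 : ‖T x‖ * ‖T x‖ ^ (m + 1) ≤ ‖T x‖ * (‖(T ^ (m + 1)) x‖ * ‖x‖ ^ m) :=
        mul_le_mul_of_nonneg_left ih (norm_nonneg _)
      have h3 : ‖T x‖ * (‖(T ^ (m + 1)) x‖ * ‖x‖ ^ m)
          = (‖T x‖ * ‖(T ^ (m + 1)) x‖) * ‖x‖ ^ m := by ring
      have h4 : (‖T x‖ * ‖(T ^ (m + 1)) x‖) * ‖x‖ ^ m ≤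
          (‖x‖ * ‖(T ^ (m + 2)) x‖) * ‖x‖ ^ m :=
        mul_le_mul_of_nonneg_right (ratio x (m + 1)) (by positivity)
      calc ‖T x‖ ^ (m + 2) = ‖T x‖ * ‖T x‖ ^ (m + 1) := h1
        _ ≤ (‖T x‖ * ‖(T ^ (m + 1)) x‖) * ‖x‖ ^ m := by rw [← h3]; exact h2
        _ ≤ (‖x‖ * ‖(T ^ (m + 2)) x‖) * ‖x‖ ^ m := h4
        _ = ‖(T ^ (m + 2)) x‖ * ‖x‖ ^ (m + 1) := by ring
  have part1 : ∀ x : H, ∀ n : ℕ, 1 ≤ n → ‖T x‖ ^ n ≤ ‖(T ^ n) x‖ * ‖x‖ ^ (n - 1) := by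
    intro x n hn
    obtain ⟨m, rfl⟩ := Nat.exists_eq_add_of_le' hn
    simpa using main x m
  refine ⟨part1, ?_⟩
  -- norm equality ‖T^n‖ = ‖T‖^n for n ≥ 1
  have hge : ∀ n : ℕ, 1 ≤ n → ‖T‖₊ ^ n ≤ ‖T ^ n‖₊ := by
    intro n hn
    by_contra hc
    push_neg at hc
    set r : NNReal := ‖T ^ n‖₊ ^ (1 / (n : ℝ)) with hr
    have hn0 : (n : ℝ) ≠ 0 := Nat.cast_ne_zero.mpr (by omega)
    have hrlt : r < ‖T‖₊ := by
      have := NNReal.rpow_lt_rpow hc (by positivity : (0:ℝ) < 1 / n)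
      rwa [← NNReal.rpow_natCast (‖T‖₊) n, ← NNReal.rpow_mul,
        mul_one_div_cancel hn0, NNReal.rpow_one] at this
    obtain ⟨x, hx1, hxr⟩ := T.exists_lt_apply_of_lt_opNNNorm hrlt
    have hrn : r ^ n = ‖T ^ n‖₊ := by
      rw [hr, ← NNReal.rpow_natCast _ n, ← NNReal.rpow_mul,
        one_div_mul_cancel hn0, NNReal.rpow_one]
    have hmain : ‖T x‖₊ ^ n ≤ ‖(T ^ n) x‖₊ * ‖x‖₊ ^ (n - 1) := by
      rw [← NNReal.coe_le_coe]
      push_cast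
      simpa [ContinuousLinearMap.coe_pow] using part1 x n hn
    have h5 : ‖(T ^ n) x‖₊ ≤ ‖T ^ n‖₊ * ‖x‖₊ := (T ^ n).le_opNNNorm x
    have hxn : ‖x‖₊ * ‖x‖₊ ^ (n - 1) = ‖x‖₊ ^ n := by
      rw [← pow_succ']
      congr 1
      omega
    have h6 : ‖T x‖₊ ^ n ≤ ‖T ^ n‖₊ * ‖x‖₊ ^ n := by
      calc ‖T x‖₊ ^ n ≤ ‖(T ^ n) x‖₊ * ‖x‖₊ ^ (n - 1) := hmain
        _ ≤ (‖T ^ n‖₊ * ‖x‖₊) * ‖x‖₊ ^ (n - 1) := mul_le_mul_left h5 _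
        _ = ‖T ^ n‖₊ * (‖x‖₊ * ‖x‖₊ ^ (n - 1)) := by ring
        _ = ‖T ^ n‖₊ * ‖x‖₊ ^ n := by rw [hxn]
    have h7 : ‖x‖₊ ^ n ≤ 1 := pow_le_one' hx1.le n
    have h8 : ‖T x‖₊ ^ n ≤ ‖T ^ n‖₊ := h6.trans (by
      calc ‖T ^ n‖₊ * ‖x‖₊ ^ n ≤ ‖T ^ n‖₊ * 1 := mul_le_mul_right h7 _
        _ = ‖T ^ n‖₊ := mul_one _)
    have h9 : r ^ n < ‖T x‖₊ ^ n := pow_lt_pow_left₀ hxr (zero_le) (by omega)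
    rw [hrn] at h9
    exact absurd (h9.trans_le h8) (lt_irrefl _)
  have heq : ∀ n : ℕ, 1 ≤ n → ‖T ^ n‖₊ = ‖T‖₊ ^ n := fun n hn =>
    le_antisymm (nnnorm_pow_le' T hn) (hge n hn)
  have hlim := spectrum.pow_nnnorm_pow_one_div_tendsto_nhds_spectralRadius T
  have hconst : Filter.Tendsto (fun n : ℕ => ((‖T ^ n‖₊ : ENNReal) ^ (1 / (n : ℝ))))
      Filter.atTop (nhds (‖T‖₊ : ENNReal)) := by
    apply Filter.Tendsto.congr' _ tendsto_const_nhds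
    filter_upwards [Filter.eventually_ge_atTop 1] with n hn
    have hn0 : (n : ℝ) ≠ 0 := Nat.cast_ne_zero.mpr (by omega)
    rw [heq n hn]
    push_cast
    rw [← ENNReal.rpow_natCast _ n, ← ENNReal.rpow_mul, mul_one_div_cancel hn0,
      ENNReal.rpow_one]
  exact tendsto_nhds_unique hlim hconst
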